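/- arXiv:1712.04635 — 10 statements merged into one kernel-verified Lean document; each statement's English description precedes it below -/
import Mathlib

section
/- For every integer m ≥ 1, the identity ξ_{m+1} = (1 − x·y)·ξ_m + x^m·(1 − y)^{m+1} holds in ℤ[x,y]. -/
open MvPolynomial Finset

section aux
variable {R : Type*} [CommRing R]

lemma geom_shift (x : R) (j n : ℕ) :
    x * ∑ i ∈ Icc j n, x ^ i = ∑ i ∈ Icc (j + 1) (n + 1), x ^ i := by
  rw [← Finset.map_add_right_Icc j n 1, Finset.sum_map, Finset.mul_sum]
  simp [addRightEmbedding, pow_succ, mul_comm]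

lemma key_sum (x y : R) (n : ℕ) :
    (∑ j ∈ range (n+1+1), ∑ i ∈ Icc j (n+1),
        (-1:R)^j * ((n+1+1+1).choose j : R) * x^i * y^j)
  = (1 - x*y) * (∑ j ∈ range (n+1), ∑ i ∈ Icc j n,
        (-1:R)^j * ((n+1+1).choose j : R) * x^i * y^j)
    + x^(n+1) * ∑ j ∈ range (n+1+1), (-1:R)^j * ((n+1+1).choose j : R) * y^j := by
  -- pack inner sums
  have pack : ∀ (b : ℕ) (c : ℕ → R),
      (∑ j ∈ range b, ∑ i ∈ Icc j n, (-1:R)^j * c j * x^i * y^j)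
      = ∑ j ∈ range b, (-1:R)^j * c j * y^j * ∑ i ∈ Icc j n, x^i := by
    intro b c
    refine Finset.sum_congr rfl fun j _ => ?_
    rw [Finset.mul_sum]
    exact Finset.sum_congr rfl fun i _ => by ring
  have pack' : ∀ (c : ℕ → R),
      (∑ j ∈ range (n+1+1), ∑ i ∈ Icc j (n+1), (-1:R)^j * c j * x^i * y^j)
      = ∑ j ∈ range (n+1+1), (-1:R)^j * c j * y^j * ∑ i ∈ Icc j (n+1), x^i := by
    intro c
    refine Finset.sum_congr rfl fun j _ => ?_
    rw [Finset.mul_sum]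
    exact Finset.sum_congr rfl fun i _ => by ring
  rw [pack, pack']
  set G : ℕ → ℕ → R := fun a b => ∑ i ∈ Icc a b, x ^ i with hG
  -- split LHS: peel first term
  rw [Finset.sum_range_succ' (fun j => (-1:R)^j * ((n+1+1+1).choose j : R) * y^j * G j (n+1)) (n+1)]
  -- use Pascal on each shifted term
  have pascal : ∀ j, ((n+1+1+1).choose (j+1) : R)
      = ((n+1+1).choose j : R) + ((n+1+1).choose (j+1) : R) := by
    intro j
    rw [Nat.choose_succ_succ (n+1+1) j, Nat.cast_add]
  have hsplit : (∑ j ∈ range (n+1),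
        (-1:R)^(j+1) * ((n+1+1+1).choose (j+1) : R) * y^(j+1) * G (j+1) (n+1))
      = (∑ j ∈ range (n+1), (-1:R)^(j+1) * ((n+1+1).choose j : R) * y^(j+1) * G (j+1) (n+1))
      + (∑ j ∈ range (n+1), (-1:R)^(j+1) * ((n+1+1).choose (j+1) : R) * y^(j+1) * G (j+1) (n+1)) := by
    rw [← Finset.sum_add_distrib]
    refine Finset.sum_congr rfl fun j _ => ?_
    rw [pascal j]; ring
  rw [hsplit]
  -- first part equals -(x*y) * S
  have hA : (∑ j ∈ range (n+1), (-1:R)^(j+1) * ((n+1+1).choose j : R) * y^(j+1) * G (j+1) (n+1))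
      = -(x*y) * ∑ j ∈ range (n+1), (-1:R)^j * ((n+1+1).choose j : R) * y^j * G j n := by
    rw [Finset.mul_sum]
    refine Finset.sum_congr rfl fun j _ => ?_
    have := geom_shift x j n
    rw [hG]
    simp only
    rw [← this]
    ring
  rw [hA]
  -- second part + first peeled term reassembles to sum over range (n+2) of F'
  have hB : (∑ j ∈ range (n+1), (-1:R)^(j+1) * ((n+1+1).choose (j+1) : R) * y^(j+1) * G (j+1) (n+1))
      + (-1:R)^0 * ((n+1+1+1).choose 0 : R) * y^0 * G 0 (n+1)
      = ∑ j ∈ range (n+1+1), (-1:R)^j * ((n+1+1).choose j : R) * y^j * G j (n+1) := by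
    rw [Finset.sum_range_succ' (fun j => (-1:R)^j * ((n+1+1).choose j : R) * y^j * G j (n+1)) (n+1)]
    simp
  -- split G j (n+1) = G j n + x^(n+1)
  have htop : ∀ j ∈ range (n+1+1), (-1:R)^j * ((n+1+1).choose j : R) * y^j * G j (n+1)
      = (-1:R)^j * ((n+1+1).choose j : R) * y^j * G j n
        + (-1:R)^j * ((n+1+1).choose j : R) * y^j * x^(n+1) := by
    intro j hj
    have hjle : j ≤ n + 1 := Nat.lt_succ_iff.mp (Finset.mem_range.mp hj)
    rw [hG]
    simp only
    rw [Finset.sum_Icc_succ_top hjle]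
    ring
  have hC : (∑ j ∈ range (n+1+1), (-1:R)^j * ((n+1+1).choose j : R) * y^j * G j (n+1))
      = (∑ j ∈ range (n+1), (-1:R)^j * ((n+1+1).choose j : R) * y^j * G j n)
        + x^(n+1) * ∑ j ∈ range (n+1+1), (-1:R)^j * ((n+1+1).choose j : R) * y^j := by
    rw [Finset.sum_congr rfl htop, Finset.sum_add_distrib]
    congr 1
    · -- last term vanishes: G (n+1) n = 0
      rw [Finset.sum_range_succ]
      have : G (n+1) n = 0 := by
        rw [hG]; simp [Finset.Icc_eq_empty_of_lt (Nat.lt_succ_self n)]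
      rw [this]
      simp
    · rw [Finset.mul_sum]
      exact Finset.sum_congr rfl fun j _ => by ring
  rw [add_assoc, hB, hC]
  simp only [hG]
  ring

lemma binom_expand (y : R) (k : ℕ) :
    (1 - y) ^ k = ∑ j ∈ range (k + 1), (-1:R)^j * (k.choose j : R) * y^j := by
  rw [sub_eq_add_neg, add_comm, add_pow]
  refine Finset.sum_congr rfl fun j _ => ?_
  rw [one_pow, neg_pow]
  ring

end aux

/-- The polynomial `ξ_m ∈ ℤ[x,y]`, where `X 0` plays the role of `x` and `X 1` of `y`:
`ξ_m = (−1)^m x^m y^(m+1) + Σ_{j=0}^{m−1} Σ_{i=j}^{m−1} (−1)^j C(m+1,j) x^i y^j`. -/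
noncomputable def xi (m : ℕ) : MvPolynomial (Fin 2) ℤ :=
  (-1) ^ m * X 0 ^ m * X 1 ^ (m + 1) +
    ∑ j ∈ Finset.range m, ∑ i ∈ Finset.Icc j (m - 1),
      (-1) ^ j * ((m + 1).choose j : MvPolynomial (Fin 2) ℤ) * X 0 ^ i * X 1 ^ j

theorem stmt_0 (m : ℕ) (hm : 1 ≤ m) :
    xi (m + 1) = (1 - X 0 * X 1) * xi m + X 0 ^ m * (1 - X 1) ^ (m + 1) := by
  obtain ⟨n, rfl⟩ : ∃ n, m = n + 1 := ⟨m - 1, (Nat.succ_pred_eq_of_pos hm).symm⟩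
  unfold xi
  simp only [Nat.add_sub_cancel]
  rw [binom_expand (X 1 : MvPolynomial (Fin 2) ℤ) (n + 1 + 1),
    Finset.sum_range_succ (fun j => (-1 : MvPolynomial (Fin 2) ℤ)^j * ((n+1+1).choose j : MvPolynomial (Fin 2) ℤ) * X 1 ^ j) (n+1+1),
    Nat.choose_self, Nat.cast_one,
    key_sum (X 0 : MvPolynomial (Fin 2) ℤ) (X 1) n]
  ring
end

section
/- For every integer m ≥ 1, the identity ξ_{m+1} = x·(1 − y)·ξ_m + (1 − x·y)^{m+1} holds in ℤ[x,y]. -/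
open MvPolynomial Finset

lemma geom_aux {R : Type*} [CommRing R] (x : R) (j : ℕ) :
    ∀ n, j ≤ n → (1 - x) * ∑ i ∈ Finset.Icc j n, x ^ i = x ^ j - x ^ (n + 1) := by
  intro n
  induction n with
  | zero => intro h; interval_cases j; simp
  | succ n ih =>
      intro h
      rcases Nat.lt_or_ge j (n + 1) with h' | h'
      · rw [Finset.sum_Icc_succ_top (by omega), mul_add, ih (by omega)]
        ring
      · have : j = n + 1 := by omega
        subst this
        simp
        ring

lemma key (n : ℕ) :
    (1 - X 0) * xi (n + 1) =
      (1 - X 0 * X 1) ^ (n + 2) - X 0 ^ (n + 1) * (1 - X 1) ^ (n + 2) := by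
  have expand : ∀ a : MvPolynomial (Fin 2) ℤ,
      (1 - a) ^ (n + 2) =
        ∑ k ∈ Finset.range (n + 3),
          (-1) ^ k * ((n + 2).choose k : MvPolynomial (Fin 2) ℤ) * a ^ k := by
    intro a
    rw [sub_eq_add_neg, add_comm, add_pow]
    exact Finset.sum_congr rfl fun k _ => by rw [neg_pow]; ring
  have hL : (1 - X 0) * xi (n + 1) =
      (1 - X 0) * ((-1) ^ (n + 1) * X 0 ^ (n + 1) * X 1 ^ (n + 2)) +
      ∑ j ∈ Finset.range (n + 1),
        (-1) ^ j * ((n + 2).choose j : MvPolynomial (Fin 2) ℤ) *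
          (X 0 ^ j - X 0 ^ (n + 1)) * X 1 ^ j := by
    rw [xi]
    simp only [Nat.add_sub_cancel]
    rw [mul_add]
    congr 1
    rw [Finset.mul_sum]
    refine Finset.sum_congr rfl fun j hj => ?_
    have hj' : j ≤ n := Nat.lt_succ_iff.mp (Finset.mem_range.mp hj)
    have h1 : ∑ i ∈ Finset.Icc j n,
        (-1) ^ j * ((n + 1 + 1).choose j : MvPolynomial (Fin 2) ℤ) * X 0 ^ i * X 1 ^ j
        = (∑ i ∈ Finset.Icc j n, X 0 ^ i) *
          ((-1) ^ j * ((n + 2).choose j : MvPolynomial (Fin 2) ℤ) * X 1 ^ j) := by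
      rw [Finset.sum_mul]
      exact Finset.sum_congr rfl fun i _ => by ring
    rw [h1, ← mul_assoc, geom_aux _ _ _ hj']
    ring
  rw [hL, expand (X 0 * X 1), expand (X 1), Finset.mul_sum, ← Finset.sum_sub_distrib]
  conv_rhs => rw [Finset.sum_range_succ, Finset.sum_range_succ]
  have hsum : ∀ j ∈ Finset.range (n + 1),
      (-1) ^ j * ((n + 2).choose j : MvPolynomial (Fin 2) ℤ) *
          (X 0 ^ j - X 0 ^ (n + 1)) * X 1 ^ j =
      (-1) ^ j * ((n + 2).choose j : MvPolynomial (Fin 2) ℤ) * (X 0 * X 1) ^ j -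
        X 0 ^ (n + 1) * ((-1) ^ j * ((n + 2).choose j : MvPolynomial (Fin 2) ℤ) * X 1 ^ j) := by
    intro j _
    rw [mul_pow]
    ring
  rw [Finset.sum_congr rfl hsum]
  have hc1 : ((n + 2).choose (n + 1) : MvPolynomial (Fin 2) ℤ) = (n : MvPolynomial (Fin 2) ℤ) + 2 := by
    rw [Nat.choose_succ_self_right]
    push_cast
    ring
  rw [hc1, Nat.choose_self]
  push_cast
  ring

theorem stmt_1 (m : ℕ) (hm : 1 ≤ m) :
    xi (m + 1) = X 0 * (1 - X 1) * xi m + (1 - X 0 * X 1) ^ (m + 1) := by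
  obtain ⟨n, rfl⟩ := Nat.exists_eq_add_of_le' hm
  have hne : (1 - X 0 : MvPolynomial (Fin 2) ℤ) ≠ 0 := by
    intro h
    have := congrArg (MvPolynomial.eval (fun _ => (0 : ℤ))) h
    simp at this
  apply mul_left_cancel₀ hne
  have k1 := key n
  have k2 := key (n + 1)
  rw [show n + 1 + 1 = n + 2 by ring] at k2 ⊢
  rw [k2]
  linear_combination (-(X 0 * (1 - X 1)) : MvPolynomial (Fin 2) ℤ) * k1
end

section
/- For every integer m ≥ 1, the polynomial ξ_m lies in the m-th power of the ideal of ℤ[x,y] generated by (x − 1) and (y − 1); that is, ξ_m vanishes to order at least m at the point (1,1). -/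
open MvPolynomial Finset

/-- The alternate form of `ξ_m`. -/
noncomputable def xiF (m : ℕ) : MvPolynomial (Fin 2) ℤ :=
  -(X 0 ^ m * (1 - X 1) ^ (m + 1)) +
    ∑ k ∈ Finset.range (m + 1), ((m + 1).choose (k + 1) : MvPolynomial (Fin 2) ℤ) *
      (1 - X 0) ^ k * X 0 ^ (m - k) * (1 - X 1) ^ (m - k)

lemma lemA (m : ℕ) (hm : 1 ≤ m) :
    (X 0 - 1) * xi m
      = X 0 ^ m * (1 - X 1 : MvPolynomial (Fin 2) ℤ) ^ (m + 1) - (1 - X 0 * X 1) ^ (m + 1) := by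
  obtain ⟨n, rfl⟩ : ∃ n, m = n + 1 := ⟨m - 1, (Nat.succ_pred_eq_of_pos hm).symm⟩
  have e1 : (1 - X 1 : MvPolynomial (Fin 2) ℤ) ^ (n + 1 + 1)
      = ∑ k ∈ range (n + 1 + 1 + 1), (-X 1 : MvPolynomial (Fin 2) ℤ) ^ k *
          ((n + 1 + 1).choose k : MvPolynomial (Fin 2) ℤ) := by
    rw [show (1 - X 1 : MvPolynomial (Fin 2) ℤ) = -X 1 + 1 from by ring, add_pow]
    simp
  have e2 : (1 - X 0 * X 1 : MvPolynomial (Fin 2) ℤ) ^ (n + 1 + 1)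
      = ∑ k ∈ range (n + 1 + 1 + 1), (-(X 0 * X 1) : MvPolynomial (Fin 2) ℤ) ^ k *
          ((n + 1 + 1).choose k : MvPolynomial (Fin 2) ℤ) := by
    rw [show (1 - X 0 * X 1 : MvPolynomial (Fin 2) ℤ) = -(X 0 * X 1) + 1 from by ring, add_pow]
    simp
  rw [e1, e2, Finset.mul_sum, ← Finset.sum_sub_distrib, Finset.sum_range_succ,
    Finset.sum_range_succ]
  rw [xi, mul_add, Finset.mul_sum, Nat.add_sub_cancel]
  have hterm : ∀ j ∈ range (n + 1),
      (X 0 - 1) * ∑ i ∈ Finset.Icc j n,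
          (-1) ^ j * ((n + 1 + 1).choose j : MvPolynomial (Fin 2) ℤ) * X 0 ^ i * X 1 ^ j
        = X 0 ^ (n + 1) * (-X 1) ^ j * ((n + 1 + 1).choose j : MvPolynomial (Fin 2) ℤ)
          - (-(X 0 * X 1)) ^ j * ((n + 1 + 1).choose j : MvPolynomial (Fin 2) ℤ) := by
    intro j hj
    have hj' : j ≤ n + 1 := le_of_lt (mem_range.mp hj)
    rw [← Finset.Ico_add_one_right_eq_Icc]
    have hs : ∑ i ∈ Finset.Ico j (n + 1),
        (-1) ^ j * ((n + 1 + 1).choose j : MvPolynomial (Fin 2) ℤ) * X 0 ^ i * X 1 ^ j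
        = ((-1) ^ j * ((n + 1 + 1).choose j : MvPolynomial (Fin 2) ℤ) * X 1 ^ j) *
            ∑ i ∈ Finset.Ico j (n + 1), X 0 ^ i := by
      rw [Finset.mul_sum]
      exact Finset.sum_congr rfl fun i _ => by ring
    rw [hs]
    have hg := geom_sum_Ico_mul (X 0 : MvPolynomial (Fin 2) ℤ) hj'
    calc (X 0 - 1) * (((-1) ^ j * ((n + 1 + 1).choose j : MvPolynomial (Fin 2) ℤ) * X 1 ^ j) *
            ∑ i ∈ Finset.Ico j (n + 1), X 0 ^ i)
        = ((-1) ^ j * ((n + 1 + 1).choose j : MvPolynomial (Fin 2) ℤ) * X 1 ^ j) *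
            ((∑ i ∈ Finset.Ico j (n + 1), X 0 ^ i) * (X 0 - 1)) := by ring
      _ = ((-1) ^ j * ((n + 1 + 1).choose j : MvPolynomial (Fin 2) ℤ) * X 1 ^ j) *
            (X 0 ^ (n + 1) - X 0 ^ j) := by rw [hg]
      _ = _ := by
            rw [show (-(X 0 * X 1) : MvPolynomial (Fin 2) ℤ) = X 0 * (-X 1) from by ring,
              mul_pow]
            rcases Nat.even_or_odd j with h | h
            · simp only [h.neg_pow]; ring
            · simp only [h.neg_pow]; ring
  rw [Finset.sum_congr rfl hterm]
  rw [show (-(X 0 * X 1) : MvPolynomial (Fin 2) ℤ) = X 0 * (-X 1) from by ring]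
  simp only [mul_pow, mul_assoc]
  have hp : (-X 1 : MvPolynomial (Fin 2) ℤ) ^ (n + 2)
      = -((-1 : MvPolynomial (Fin 2) ℤ) ^ (n + 1) * X 1 ^ (n + 2)) := by
    have h1 : (-X 1 : MvPolynomial (Fin 2) ℤ) ^ (n + 2) = (-X 1) ^ (n + 1) * (-X 1) :=
      pow_succ _ _
    have h2 : (X 1 : MvPolynomial (Fin 2) ℤ) ^ (n + 2) = X 1 ^ (n + 1) * X 1 := pow_succ _ _
    rw [h1, h2, neg_pow]
    ring
  rw [hp, show ((n + 1 + 1).choose (n + 2)) = 1 from Nat.choose_self _]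
  push_cast
  generalize (-1 : MvPolynomial (Fin 2) ℤ) ^ (n + 1) = E
  ring

lemma lemB (m : ℕ) :
    (X 0 - 1) * xiF m
      = X 0 ^ m * (1 - X 1 : MvPolynomial (Fin 2) ℤ) ^ (m + 1) - (1 - X 0 * X 1) ^ (m + 1) := by
  rw [xiF]

  rw [show (1 - X 0 * X 1 : MvPolynomial (Fin 2) ℤ) = (1 - X 0) + X 0 * (1 - X 1) from by ring,
    add_pow, Finset.sum_range_succ' _ (m + 1)]
  rw [mul_add, Finset.mul_sum]
  have hsum : ∑ k ∈ Finset.range (m + 1),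
      (X 0 - 1) * (((m + 1).choose (k + 1) : MvPolynomial (Fin 2) ℤ) *
        (1 - X 0) ^ k * X 0 ^ (m - k) * (1 - X 1) ^ (m - k))
      = ∑ k ∈ Finset.range (m + 1),
        -((1 - X 0 : MvPolynomial (Fin 2) ℤ) ^ (k + 1) * (X 0 * (1 - X 1)) ^ (m + 1 - (k + 1)) *
          ((m + 1).choose (k + 1) : MvPolynomial (Fin 2) ℤ)) := by
    apply Finset.sum_congr rfl
    intro k hk
    rw [Nat.succ_sub_succ, mul_pow, pow_succ]
    ring
  rw [hsum, Finset.sum_neg_distrib]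
  simp only [pow_zero, Nat.sub_zero, Nat.choose_zero_right, Nat.cast_one, mul_one, one_mul, mul_pow]
  ring

lemma xi_eq (m : ℕ) (hm : 1 ≤ m) : xi m = xiF m := by
  have hx : (X 0 - 1 : MvPolynomial (Fin 2) ℤ) ≠ 0 := by
    intro h
    have h2 : eval (fun _ => (0 : ℤ)) (X 0 - 1 : MvPolynomial (Fin 2) ℤ) = -1 := by simp
    rw [h] at h2; simp at h2
  apply mul_left_cancel₀ hx
  rw [lemA m hm, lemB m]

theorem stmt_2 (m : ℕ) (hm : 1 ≤ m) :
    xi m ∈ (Ideal.span {X 0 - 1, X 1 - 1} : Ideal (MvPolynomial (Fin 2) ℤ)) ^ m := by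
  set I : Ideal (MvPolynomial (Fin 2) ℤ) := Ideal.span {X 0 - 1, X 1 - 1} with hI
  have hxI : (X 0 - 1 : MvPolynomial (Fin 2) ℤ) ∈ I :=
    Ideal.subset_span (by simp)
  have hyI : (X 1 - 1 : MvPolynomial (Fin 2) ℤ) ∈ I :=
    Ideal.subset_span (by simp)
  have hx' : (1 - X 0 : MvPolynomial (Fin 2) ℤ) ∈ I := by
    simpa using neg_mem hxI
  have hy' : (1 - X 1 : MvPolynomial (Fin 2) ℤ) ∈ I := by
    simpa using neg_mem hyI
  rw [xi_eq m hm, xiF]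
  apply Ideal.add_mem
  · apply neg_mem
    apply Ideal.mul_mem_left
    have : (1 - X 1 : MvPolynomial (Fin 2) ℤ) ^ (m + 1) ∈ I ^ (m + 1) :=
      Ideal.pow_mem_pow hy' _
    exact Ideal.pow_le_pow_right (Nat.le_succ m) this
  · apply Ideal.sum_mem
    intro k hk
    have hkm : k ≤ m := Nat.lt_succ_iff.mp (mem_range.mp hk)
    have h1 : (1 - X 0 : MvPolynomial (Fin 2) ℤ) ^ k ∈ I ^ k := Ideal.pow_mem_pow hx' _
    have h2 : (1 - X 1 : MvPolynomial (Fin 2) ℤ) ^ (m - k) ∈ I ^ (m - k) :=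
      Ideal.pow_mem_pow hy' _
    have h3 : (1 - X 0 : MvPolynomial (Fin 2) ℤ) ^ k * (1 - X 1) ^ (m - k) ∈ I ^ m := by
      have := Ideal.mul_mem_mul h1 h2
      rwa [← pow_add, Nat.add_sub_cancel' hkm] at this
    have : ((m + 1).choose (k + 1) : MvPolynomial (Fin 2) ℤ) * (1 - X 0) ^ k * X 0 ^ (m - k) *
        (1 - X 1) ^ (m - k) ∈ I ^ m := by
      have : (((m + 1).choose (k + 1) : MvPolynomial (Fin 2) ℤ) * X 0 ^ (m - k)) *
          ((1 - X 0) ^ k * (1 - X 1) ^ (m - k)) ∈ I ^ m := Ideal.mul_mem_left _ _ h3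
      convert this using 1; ring
    exact this
end

section
/- For every integer m ≥ 1, applying the formal partial derivative with respect to x exactly m times to ξ_m and then evaluating at x = 1, y = 1 gives (−1)^m · m!. In particular ξ_m vanishes to order exactly m at the point (1,1). -/
open MvPolynomial Finset

/-- Auxiliary: `F m = x^m (1-y)^{m+1} - (1-xy)^{m+1}`. -/
noncomputable def auxF (m : ℕ) : MvPolynomial (Fin 2) ℤ :=
  X 0 ^ m * (1 - X 1) ^ (m + 1) - (1 - X 0 * X 1) ^ (m + 1)

/-- Auxiliary: the cofactor of `(y-1)` in the decomposition of `(-1)^m ξ_m`. -/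
noncomputable def auxQ (m : ℕ) : MvPolynomial (Fin 2) ℤ :=
  X 0 ^ m * (X 1 - 1) ^ m +
    ∑ i ∈ Finset.range m, ((m + 1).choose (i + 1) : MvPolynomial (Fin 2) ℤ) *
      (X 0 - 1) ^ i * (X 1 - 1) ^ (m - 1 - i) * X 0 ^ (m - i)

lemma aux_hA (m : ℕ) (hm : 1 ≤ m) : (X 0 - 1) * xi m = auxF m := by
  obtain ⟨n, rfl⟩ : ∃ n, m = n + 1 := ⟨m - 1, (Nat.succ_pred_eq_of_pos hm).symm⟩
  clear hm
  have geom : ∀ j < n + 1, (X 0 - 1 : MvPolynomial (Fin 2) ℤ) *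
      ∑ i ∈ Finset.Ico j (n + 1), X 0 ^ i = X 0 ^ (n + 1) - X 0 ^ j := by
    intro j hj
    rw [Finset.sum_Ico_eq_sub _ hj.le, mul_comm, sub_mul, geom_sum_mul, geom_sum_mul]
    ring
  have key : (X 0 - 1) * xi (n + 1) =
      (-1 : MvPolynomial (Fin 2) ℤ) ^ (n + 1) * X 0 ^ (n + 1) * X 1 ^ (n + 2) * (X 0 - 1) +
      ∑ j ∈ Finset.range (n + 1), (-1) ^ j * ((n + 2).choose j : MvPolynomial (Fin 2) ℤ) *
        X 1 ^ j * (X 0 ^ (n + 1) - X 0 ^ j) := by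
    rw [xi, mul_add, Finset.mul_sum]
    congr 1
    · ring
    refine Finset.sum_congr rfl fun j hj => ?_
    rw [Finset.mem_range] at hj
    have h1 : Finset.Icc j (n + 1 - 1) = Finset.Ico j (n + 1) := by
      rw [Nat.add_sub_cancel, ← Finset.Ico_add_one_right_eq_Icc]
    rw [h1]
    have h2 : ∑ i ∈ Finset.Ico j (n + 1),
        (-1 : MvPolynomial (Fin 2) ℤ) ^ j * ((n + 1 + 1).choose j : MvPolynomial (Fin 2) ℤ)
          * X 0 ^ i * X 1 ^ j
        = ((-1) ^ j * ((n + 2).choose j : MvPolynomial (Fin 2) ℤ) * X 1 ^ j) *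
          ∑ i ∈ Finset.Ico j (n + 1), X 0 ^ i := by
      rw [Finset.mul_sum]
      exact Finset.sum_congr rfl fun i _ => by ring
    rw [h2, ← mul_assoc, mul_comm (X 0 - 1), mul_assoc, geom j hj]
  rw [key, auxF]
  have e1 : (1 - X 1 : MvPolynomial (Fin 2) ℤ) ^ (n + 1 + 1) =
      ∑ j ∈ Finset.range (n + 3), (- X 1) ^ j * ((n + 2).choose j : MvPolynomial (Fin 2) ℤ) := by
    rw [show (1 - X 1 : MvPolynomial (Fin 2) ℤ) = - X 1 + 1 by ring, add_pow]
    exact Finset.sum_congr rfl fun j _ => by rw [one_pow, mul_one]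
  have e2 : (1 - X 0 * X 1 : MvPolynomial (Fin 2) ℤ) ^ (n + 1 + 1) =
      ∑ j ∈ Finset.range (n + 3),
        (- (X 0 * X 1)) ^ j * ((n + 2).choose j : MvPolynomial (Fin 2) ℤ) := by
    rw [show (1 - X 0 * X 1 : MvPolynomial (Fin 2) ℤ) = - (X 0 * X 1) + 1 by ring, add_pow]
    exact Finset.sum_congr rfl fun j _ => by rw [one_pow, mul_one]
  rw [e1, e2, Finset.mul_sum, ← Finset.sum_sub_distrib]
  have peel : ∀ f : ℕ → MvPolynomial (Fin 2) ℤ, ∑ j ∈ Finset.range (n + 3), f j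
      = ∑ j ∈ Finset.range (n + 1), f j + (f (n + 1) + f (n + 2)) := by
    intro f
    rw [Finset.sum_range_succ, Finset.sum_range_succ, add_assoc]
  rw [peel, add_comm (∑ j ∈ Finset.range (n + 1), _)]
  congr 1
  · rw [Nat.choose_self, Nat.choose_succ_self_right]
    push_cast
    ring
  · exact Finset.sum_congr rfl fun j hj => by ring

lemma aux_hB (m : ℕ) (hm : 1 ≤ m) :
    (X 0 - 1) * ((-1) ^ m * (X 0 - 1) ^ m + (X 1 - 1) * ((-1) ^ m * auxQ m)) = auxF m := by
  obtain ⟨n, rfl⟩ : ∃ n, m = n + 1 := ⟨m - 1, (Nat.succ_pred_eq_of_pos hm).symm⟩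
  clear hm
  -- canonical inner sum
  set S : MvPolynomial (Fin 2) ℤ :=
    ∑ i ∈ Finset.range (n + 1), ((n + 2).choose (i + 1) : MvPolynomial (Fin 2) ℤ) *
      (X 0 - 1) ^ i * (X 1 - 1) ^ (n - i) * X 0 ^ (n + 1 - i) with hS
  have hQ : auxQ (n + 1) = X 0 ^ (n + 1) * (X 1 - 1) ^ (n + 1) + S := by
    rw [auxQ, hS]
    norm_num
  have e : (X 1 - 1) * (X 0 - 1) * S
      = ∑ i ∈ Finset.range (n + 1), (X 0 - 1) ^ (i + 1) * ((X 1 - 1) * X 0) ^ (n + 2 - (i + 1))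
        * ((n + 2).choose (i + 1) : MvPolynomial (Fin 2) ℤ) := by
    rw [hS, Finset.mul_sum]
    refine Finset.sum_congr rfl fun i hi => ?_
    rw [Finset.mem_range] at hi
    have h1 : n + 2 - (i + 1) = (n - i) + 1 := by omega
    have h2 : n + 1 - i = (n - i) + 1 := by omega
    rw [h1, h2, mul_pow]
    ring
  have hT : ((X 0 - 1) + (X 1 - 1) * X 0 : MvPolynomial (Fin 2) ℤ) ^ (n + 2)
      = (X 0 - 1) ^ (n + 2) + (X 1 - 1) * (X 0 - 1) * S
        + ((X 1 - 1) * X 0) ^ (n + 2) := by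
    rw [add_pow, Finset.sum_range_succ' _ (n + 2), Finset.sum_range_succ, ← e]
    have h0 : n + 2 - (n + 1 + 1) = 0 := by omega
    rw [h0]
    simp only [Nat.choose_self, Nat.choose_zero_right, Nat.cast_one, pow_zero, one_mul,
      mul_one, Nat.sub_zero]
    ring
  rw [auxF, hQ]
  have h1 : (1 - X 0 * X 1 : MvPolynomial (Fin 2) ℤ)
      = -((X 0 - 1) + (X 1 - 1) * X 0) := by ring
  have h2 : (1 - X 1 : MvPolynomial (Fin 2) ℤ) = -(X 1 - 1) := by ring
  rw [h1, h2, neg_pow (X 1 - 1 : MvPolynomial (Fin 2) ℤ), neg_pow ((X 0 - 1) + (X 1 - 1) * X 0), hT, mul_pow]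
  ring

lemma X0_sub_one_ne_zero : (X 0 - 1 : MvPolynomial (Fin 2) ℤ) ≠ 0 := by
  intro h
  have h2 := congrArg (eval (fun _ => (0 : ℤ))) h
  simp at h2

lemma xi_eq_s3 (m : ℕ) (hm : 1 ≤ m) :
    xi m = (-1) ^ m * (X 0 - 1) ^ m + (X 1 - 1) * ((-1) ^ m * auxQ m) :=
  mul_left_cancel₀ X0_sub_one_ne_zero ((aux_hA m hm).trans (aux_hB m hm).symm)

lemma pd_iter_mul (a : MvPolynomial (Fin 2) ℤ) (ha : pderiv 0 a = 0) (n : ℕ) :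
    ∀ p, (pderiv 0)^[n] (a * p) = a * (pderiv 0)^[n] p := by
  induction n with
  | zero => intro p; simp
  | succ k ih =>
    intro p
    rw [Function.iterate_succ_apply, Function.iterate_succ_apply, pderiv_mul, ha, zero_mul,
      zero_add, ih]

lemma pd_pow (k : ℕ) :
    pderiv 0 ((X 0 - 1 : MvPolynomial (Fin 2) ℤ) ^ (k + 1))
      = C ((k : ℤ) + 1) * (X 0 - 1) ^ k := by
  induction k with
  | zero => simp
  | succ k ih =>
    rw [pow_succ, pderiv_mul, ih]
    have h1 : pderiv (R := ℤ) (σ := Fin 2) 0 (X 0 - 1) = 1 := by simp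
    have h6 : (C (((k : ℕ) + 1 : ℕ) + 1 : ℤ) : MvPolynomial (Fin 2) ℤ) = C ((k : ℤ) + 1) + 1 := by
      rw [show (((k : ℕ) + 1 : ℕ) + 1 : ℤ) = ((k : ℤ) + 1) + 1 by push_cast; ring, map_add,
        map_one]
    rw [h1, h6]
    ring

lemma pd_iter_pow (n : ℕ) :
    (pderiv 0)^[n] ((X 0 - 1 : MvPolynomial (Fin 2) ℤ) ^ n) = C ((n.factorial : ℤ)) := by
  induction n with
  | zero => simp
  | succ k ih =>
    have hC : pderiv (R := ℤ) (σ := Fin 2) 0 (C ((k : ℤ) + 1)) = 0 := pderiv_C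
    rw [Function.iterate_succ_apply, pd_pow, pd_iter_mul _ hC, ih, ← map_mul]
    congr 1

lemma pd_iter_add (n : ℕ) (p q : MvPolynomial (Fin 2) ℤ) :
    (pderiv 0)^[n] (p + q) = (pderiv 0)^[n] p + (pderiv 0)^[n] q := by
  induction n generalizing p q with
  | zero => simp
  | succ k ih =>
    rw [Function.iterate_succ_apply, Function.iterate_succ_apply, Function.iterate_succ_apply,
      map_add, ih]

theorem stmt_3 (m : ℕ) (hm : 1 ≤ m) :
    MvPolynomial.eval (fun _ => (1 : ℤ)) ((MvPolynomial.pderiv 0)^[m] (xi m)) =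
      (-1) ^ m * (m.factorial : ℤ) ∧
    xi m ∈ (Ideal.span {X 0 - 1, X 1 - 1} : Ideal (MvPolynomial (Fin 2) ℤ)) ^ m ∧
    xi m ∉ (Ideal.span {X 0 - 1, X 1 - 1} : Ideal (MvPolynomial (Fin 2) ℤ)) ^ (m + 1) := by
  have hsign : ((-1 : MvPolynomial (Fin 2) ℤ)) ^ m = C ((-1 : ℤ) ^ m) := by
    rw [map_pow, map_neg, map_one]
  have hsign0 : pderiv (R := ℤ) (σ := Fin 2) 0 ((-1) ^ m) = 0 := by
    rw [hsign]; exact pderiv_C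
  have hv0 : pderiv (R := ℤ) (σ := Fin 2) 0 (X 1 - 1) = 0 := by simp
  refine ⟨?_, ?_, ?_⟩
  · -- derivative computation
    rw [xi_eq_s3 m hm, pd_iter_add, pd_iter_mul _ hsign0, pd_iter_mul _ hv0, pd_iter_pow]
    rw [map_add, map_mul, map_mul, hsign]
    simp
  · -- membership in I^m
    set I : Ideal (MvPolynomial (Fin 2) ℤ) := Ideal.span {X 0 - 1, X 1 - 1} with hI
    have hu : (X 0 - 1 : MvPolynomial (Fin 2) ℤ) ∈ I := Ideal.subset_span (by simp)
    have hv : (X 1 - 1 : MvPolynomial (Fin 2) ℤ) ∈ I := Ideal.subset_span (by simp)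
    have hmem : ∀ (r : MvPolynomial (Fin 2) ℤ) (a b : ℕ),
        r * ((X 0 - 1) ^ a * (X 1 - 1) ^ b) ∈ I ^ (a + b) := by
      intro r a b
      refine Ideal.mul_mem_left _ _ ?_
      rw [pow_add]
      exact Ideal.mul_mem_mul (Ideal.pow_mem_pow hu a) (Ideal.pow_mem_pow hv b)
    rw [xi_eq_s3 m hm]
    refine Ideal.add_mem _ ?_ ?_
    · have := hmem ((-1) ^ m * (X 1 - 1) ^ 0) m 0
      simpa using this
    · simp only [auxQ, mul_add, Finset.mul_sum]
      refine Ideal.add_mem _ ?_ (Ideal.sum_mem _ fun i hi => ?_)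
      · have h2 := hmem ((-1) ^ m * X 0 ^ m) 0 (m + 1)
        have h3 : I ^ (0 + (m + 1)) ≤ I ^ m := Ideal.pow_le_pow_right (by omega)
        have h4 := h3 h2
        convert h4 using 1
        ring
      · rw [Finset.mem_range] at hi
        have h2 := hmem ((-1) ^ m * ((m + 1).choose (i + 1) : MvPolynomial (Fin 2) ℤ)
          * X 0 ^ (m - i)) i (m - 1 - i + 1)
        have h3 : i + (m - 1 - i + 1) = m := by omega
        rw [h3] at h2
        convert h2 using 1
        ring
  · -- non-membership in I^(m+1)
    intro hcon
    set φ : MvPolynomial (Fin 2) ℤ →+* Polynomial ℤ :=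
      (aeval fun i : Fin 2 => if i = 0 then Polynomial.X + 1 else 1 :
        MvPolynomial (Fin 2) ℤ →ₐ[ℤ] Polynomial ℤ).toRingHom with hφdef
    have hφu : φ (X 0 - 1) = Polynomial.X := by
      simp [hφdef]
    have hφv : φ (X 1 - 1) = 0 := by
      simp [hφdef]
    have h1 : φ (xi m) ∈ Ideal.map φ
        ((Ideal.span {X 0 - 1, X 1 - 1} : Ideal (MvPolynomial (Fin 2) ℤ)) ^ (m + 1)) :=
      Ideal.mem_map_of_mem φ hcon
    rw [Ideal.map_pow, Ideal.map_span] at h1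
    have himg : φ '' {X 0 - 1, X 1 - 1} = {Polynomial.X, 0} := by
      rw [Set.image_insert_eq, Set.image_singleton, hφu, hφv]
    rw [himg, show ({Polynomial.X, 0} : Set (Polynomial ℤ)) = insert 0 {Polynomial.X} from
      Set.pair_comm _ _, Ideal.span, Submodule.span_insert_zero, ← Ideal.span,
      Ideal.span_singleton_pow, Ideal.mem_span_singleton] at h1
    have hφxi : φ (xi m) = (-1) ^ m * Polynomial.X ^ m := by
      rw [xi_eq_s3 m hm, map_add, map_mul, map_mul, map_pow, map_pow, map_neg, map_one, hφu, hφv,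
        zero_mul, add_zero]
    rw [hφxi] at h1
    have hunit : IsUnit ((-1 : Polynomial ℤ) ^ m) := (isUnit_one.neg).pow m
    rw [hunit.dvd_mul_left] at h1
    rw [Polynomial.X_pow_dvd_iff] at h1
    have := h1 m (by omega)
    rw [Polynomial.coeff_X_pow] at this
    simp at this
end

section
/- For every integer m ≥ 1, the convex hull in ℝ² of the set {(i,j) ∈ ℕ² : the coefficient of x^i·y^j in ξ_m is nonzero} equals the convex hull of the three points (0,0), (m−1,0), (m,m+1); that is, the Newton polygon of ξ_m is the triangle with vertices (0,0), (m−1,0), (m,m+1). -/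
open MvPolynomial Finset

lemma single_eq_iff (i j i' j' : ℕ) :
    (Finsupp.single (0:Fin 2) i' + Finsupp.single 1 j' = Finsupp.single 0 i + Finsupp.single 1 j)
      ↔ (i = i' ∧ j = j') := by
  constructor
  · intro h
    have h0 := DFunLike.congr_fun h 0
    have h1 := DFunLike.congr_fun h 1
    simp [Finsupp.single_apply] at h0 h1
    omega
  · rintro ⟨rfl, rfl⟩; rfl

lemma coeff_single (i j i' j' : ℕ) (a : ℤ) :
    coeff (Finsupp.single 0 i + Finsupp.single 1 j)
      (C a * X 0 ^ i' * X 1 ^ j' : MvPolynomial (Fin 2) ℤ) =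
      if i = i' ∧ j = j' then a else 0 := by
  rw [X_pow_eq_monomial, X_pow_eq_monomial, C_mul_monomial, monomial_mul, coeff_monomial]
  simp [single_eq_iff]

lemma coeff_xi (m i j : ℕ) (hm : 1 ≤ m) :
    coeff (Finsupp.single 0 i + Finsupp.single 1 j) (xi m) =
      (if i = m ∧ j = m + 1 then (-1) ^ m else 0) +
      (if j ≤ i ∧ i ≤ m - 1 then (-1) ^ j * ((m + 1).choose j : ℤ) else 0) := by
  have hC : ∀ (k n : ℕ), ((-1) ^ k * (n : MvPolynomial (Fin 2) ℤ)) = C ((-1) ^ k * (n : ℤ)) := by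
    intro k n
    simp [map_mul, map_pow]
  rw [xi, coeff_add]
  congr 1
  · have : ((-1 : MvPolynomial (Fin 2) ℤ) ^ m * X 0 ^ m * X 1 ^ (m+1))
        = C ((-1) ^ m) * X 0 ^ m * X 1 ^ (m+1) := by
      simp [map_pow]
    rw [this, coeff_single]
  · rw [MvPolynomial.coeff_sum]
    have hterm : ∀ j' ∈ Finset.range m,
        (coeff (Finsupp.single 0 i + Finsupp.single 1 j)
          (∑ i' ∈ Finset.Icc j' (m - 1),
            (-1) ^ j' * ((m + 1).choose j' : MvPolynomial (Fin 2) ℤ) * X 0 ^ i' * X 1 ^ j'))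
        = if j = j' then (if i ∈ Finset.Icc j' (m-1) then (-1) ^ j' * ((m + 1).choose j' : ℤ) else 0) else 0 := by
      intro j' _
      rw [MvPolynomial.coeff_sum]
      have : ∀ i' ∈ Finset.Icc j' (m-1),
          coeff (Finsupp.single 0 i + Finsupp.single 1 j)
            ((-1) ^ j' * ((m + 1).choose j' : MvPolynomial (Fin 2) ℤ) * X 0 ^ i' * X 1 ^ j')
          = if j = j' then (if i = i' then (-1) ^ j' * ((m + 1).choose j' : ℤ) else 0) else 0 := by
        intro i' _
        rw [hC, coeff_single]
        by_cases h1 : i = i' <;> by_cases h2 : j = j' <;> simp [h1, h2]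
      rw [Finset.sum_congr rfl this]
      by_cases h2 : j = j'
      · simp only [h2, if_true]
        exact Finset.sum_ite_eq _ i _
      · simp [h2]
    rw [Finset.sum_congr rfl hterm, Finset.sum_ite_eq]
    simp only [Finset.mem_range, Finset.mem_Icc]
    split_ifs <;> first | rfl | (exfalso; omega)

lemma coeff_ne_iff (m i j : ℕ) (hm : 1 ≤ m) :
    coeff (Finsupp.single 0 i + Finsupp.single 1 j) (xi m) ≠ 0 ↔
      ((i = m ∧ j = m + 1) ∨ (j ≤ i ∧ i ≤ m - 1)) := by
  rw [coeff_xi m i j hm]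
  by_cases h1 : i = m ∧ j = m + 1 <;> by_cases h2 : j ≤ i ∧ i ≤ m - 1
  · exfalso; omega
  · simp [h1, h2, pow_ne_zero]
  · have : ((m + 1).choose j : ℤ) ≠ 0 := by
      have : 0 < (m+1).choose j := Nat.choose_pos (by omega)
      exact_mod_cast this.ne'
    simp [h1, h2, mul_ne_zero (pow_ne_zero _ (by norm_num : (-1:ℤ) ≠ 0)) this]
  · simp [h1, h2]

lemma combo_mem {A B C p : ℝ × ℝ} {a b c : ℝ} (ha : 0 ≤ a) (hb : 0 ≤ b) (hc : 0 ≤ c)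
    (hsum : a + b + c = 1) (hp : p = a • A + b • B + c • C) :
    p ∈ convexHull ℝ ({A, B, C} : Set (ℝ × ℝ)) := by
  have := Finset.centerMass_mem_convexHull (Finset.univ : Finset (Fin 3))
    (w := ![a, b, c]) (z := ![A, B, C])
    (by intro i _; fin_cases i <;> assumption)
    (by simp [Fin.sum_univ_three, hsum])
    ((by intro i _; fin_cases i <;> simp [Set.mem_insert_iff]) :
      ∀ i ∈ (Finset.univ : Finset (Fin 3)), ![A, B, C] i ∈ ({A, B, C} : Set (ℝ × ℝ)))
  rw [Finset.centerMass] at this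
  simpa [Fin.sum_univ_three, hsum, hp] using this

theorem stmt_4 (m : ℕ) (hm : 1 ≤ m) :
    convexHull ℝ {p : ℝ × ℝ | ∃ i j : ℕ,
        MvPolynomial.coeff (Finsupp.single 0 i + Finsupp.single 1 j) (xi m) ≠ 0 ∧
        p = ((i : ℝ), (j : ℝ))} =
      convexHull ℝ {((0 : ℝ), (0 : ℝ)), ((m : ℝ) - 1, (0 : ℝ)), ((m : ℝ), (m : ℝ) + 1)} := by
  apply Set.Subset.antisymm
  · apply convexHull_min _ (convex_convexHull ℝ _)
    rintro p ⟨i, j, hne, rfl⟩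
    rw [coeff_ne_iff m i j hm] at hne
    rcases hne with ⟨rfl, rfl⟩ | ⟨hji, him⟩
    · apply subset_convexHull
      right; right
      simp [Prod.ext_iff]
    · by_cases hm1 : m = 1
      · subst hm1
        have hi : i = 0 := by omega
        have hj : j = 0 := by omega
        subst hi; subst hj
        apply subset_convexHull
        left
        simp
      · have hM2 : (2 : ℝ) ≤ (m : ℝ) := by exact_mod_cast (show 2 ≤ m by omega)
        have hMm : (0:ℝ) < (m:ℝ) - 1 := by linarith
        have hMp : (0:ℝ) < (m:ℝ) + 1 := by linarith
        have hji' : (j : ℝ) ≤ (i : ℝ) := by exact_mod_cast hji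
        have him' : (i : ℝ) ≤ (m:ℝ) - 1 := by
          have h : (i : ℝ) + 1 ≤ (m:ℝ) := by exact_mod_cast (show i + 1 ≤ m by omega)
          linarith
        have hj0 : (0:ℝ) ≤ (j:ℝ) := Nat.cast_nonneg j
        have hi0 : (0:ℝ) ≤ (i:ℝ) := Nat.cast_nonneg i
        refine combo_mem
          (a := 1 - ((i : ℝ) * ((m:ℝ) + 1) - (j : ℝ) * (m:ℝ)) / (((m:ℝ) - 1) * ((m:ℝ) + 1))
                  - (j : ℝ) / ((m:ℝ) + 1))
          (b := ((i : ℝ) * ((m:ℝ) + 1) - (j : ℝ) * (m:ℝ)) / (((m:ℝ) - 1) * ((m:ℝ) + 1)))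
          (c := (j : ℝ) / ((m:ℝ) + 1)) ?_ ?_ ?_ (by ring) ?_
        · rw [sub_sub, sub_nonneg, div_add_div _ _ (by positivity) (ne_of_gt hMp)]
          rw [div_le_one (by positivity)]
          nlinarith [mul_le_mul_of_nonneg_right (mul_le_mul_of_nonneg_right him' hMp.le) hMp.le,
            mul_nonneg hj0 hMp.le]
        · apply div_nonneg _ (by positivity)
          nlinarith
        · positivity
        · simp only [Prod.ext_iff, Prod.smul_mk, Prod.fst_add, Prod.snd_add, smul_eq_mul]
          constructor
          · field_simp
            ring
          · field_simp
            ring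
  · apply convexHull_mono
    rintro p (rfl | rfl | rfl)
    · exact ⟨0, 0, by rw [coeff_ne_iff m 0 0 hm]; right; omega, by simp⟩
    · refine ⟨m - 1, 0, by rw [coeff_ne_iff m (m-1) 0 hm]; right; omega, ?_⟩
      simp [Prod.ext_iff, Nat.cast_sub hm]
    · refine ⟨m, m + 1, by rw [coeff_ne_iff m m (m+1) hm]; left; omega, ?_⟩
      simp [Prod.ext_iff]
end

section
/- Let m ≥ 1 be an integer and let p be a prime. Write k = ⌊p/(m+1)⌋ and l = p mod (m+1), so p = (m+1)·k + l with 0 ≤ l ≤ m. Then in 𝔽_p[x,y] the following identity holds between the images of the polynomials ξ_m, ξ_{m+1} under the coefficient ring map ℤ → 𝔽_p: ξ_{m+1}^p + (−1)^p·x^{m·p}·(1 − y)^{(m+1)·p} = Σ_{i=0}^{k} C(k,i)·(−1)^i·ξ_{m+1}^{k−i}·(x·(1 − y)·ξ_m)^i·(1 − x·y)^l·ξ_m^p. -/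
open MvPolynomial Finset

lemma tele {R : Type*} [CommRing R] (x : R) (a : ℕ) :
    ∀ n : ℕ, a ≤ n → (1 - x) * ∑ i ∈ Finset.Ico a n, x ^ i = x ^ a - x ^ n := by
  intro n
  induction n with
  | zero => intro h; interval_cases a <;> simp
  | succ n ih =>
    intro h
    rcases eq_or_lt_of_le h with rfl | h'
    · simp
    · rw [Finset.sum_Ico_succ_top (by omega), mul_add, ih (by omega)]
      ring

lemma one_sub_X_ne : (1 - X 0 : MvPolynomial (Fin 2) ℤ) ≠ 0 := by
  intro h
  have := congrArg constantCoeff h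
  simp at this

lemma xiC (m : ℕ) :
    (1 - X 0) * xi m
      = (1 - X 0 * X 1) ^ (m + 1) - X 0 ^ m * (1 - X 1) ^ (m + 1) := by
  have hone : (1 - X 0 * X 1 : MvPolynomial (Fin 2) ℤ) = -(X 0 * X 1) + 1 := by ring
  have htwo : (1 - X 1 : MvPolynomial (Fin 2) ℤ) = -(X 1) + 1 := by ring
  rw [hone, htwo, add_pow, add_pow, Finset.mul_sum, ← Finset.sum_sub_distrib]
  rw [xi, mul_add, Finset.mul_sum]
  have hinner : ∀ j ∈ Finset.range m,
      (1 - X 0) * ∑ i ∈ Finset.Icc j (m - 1),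
          (-1) ^ j * ((m + 1).choose j : MvPolynomial (Fin 2) ℤ) * X 0 ^ i * X 1 ^ j
        = (-1) ^ j * ((m + 1).choose j : MvPolynomial (Fin 2) ℤ) * (X 0 ^ j - X 0 ^ m)
            * X 1 ^ j := by
    intro j hj
    rw [Finset.mem_range] at hj
    have hIcc : Finset.Icc j (m - 1) = Finset.Ico j m := by
      rw [← Finset.Ico_add_one_right_eq_Icc]
      congr 1
      omega
    calc (1 - X 0) * ∑ i ∈ Finset.Icc j (m - 1),
          (-1) ^ j * ((m + 1).choose j : MvPolynomial (Fin 2) ℤ) * X 0 ^ i * X 1 ^ j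
        = (-1) ^ j * ((m + 1).choose j : MvPolynomial (Fin 2) ℤ) * X 1 ^ j
            * ((1 - X 0) * ∑ i ∈ Finset.Ico j m, X 0 ^ i) := by
          rw [hIcc, Finset.mul_sum, Finset.mul_sum, Finset.mul_sum]
          exact Finset.sum_congr rfl fun i _ => by ring
      _ = (-1) ^ j * ((m + 1).choose j : MvPolynomial (Fin 2) ℤ) * (X 0 ^ j - X 0 ^ m)
            * X 1 ^ j := by rw [tele _ _ _ hj.le]; ring
  rw [Finset.sum_congr rfl hinner]
  rw [show m + 1 + 1 = m + 1 + 1 from rfl, Finset.sum_range_succ, Finset.sum_range_succ]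
  have hmain : ∀ j ∈ Finset.range m,
      (-1) ^ j * ((m + 1).choose j : MvPolynomial (Fin 2) ℤ) * (X 0 ^ j - X 0 ^ m) * X 1 ^ j
        = (-(X 0 * X 1)) ^ j * 1 ^ (m + 1 - j) * ((m + 1).choose j : MvPolynomial (Fin 2) ℤ)
            - X 0 ^ m * ((-X 1) ^ j * 1 ^ (m + 1 - j)
              * ((m + 1).choose j : MvPolynomial (Fin 2) ℤ)) := by
    intro j _
    ring
  rw [Finset.sum_congr rfl hmain]
  simp only [Nat.choose_self, Nat.cast_one, Nat.choose_succ_self_right]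
  ring

lemma xiB (m : ℕ) :
    xi (m + 1) = (1 - X 0 * X 1) * xi m + X 0 ^ m * (1 - X 1) ^ (m + 1) := by
  refine mul_left_cancel₀ one_sub_X_ne ?_
  rw [xiC (m + 1)]
  linear_combination (-(1 - X 0 * X 1)) * xiC m

lemma xiA (m : ℕ) :
    xi (m + 1) = X 0 * (1 - X 1) * xi m + (1 - X 0 * X 1) ^ (m + 1) := by
  refine mul_left_cancel₀ one_sub_X_ne ?_
  rw [xiC (m + 1)]
  linear_combination (-(X 0 * (1 - X 1))) * xiC m

theorem stmt_8 (m : ℕ) (hm : 1 ≤ m) (p : ℕ) (hp : p.Prime) :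
    letI k := p / (m + 1)
    letI l := p % (m + 1)
    letI Ξ : ℕ → MvPolynomial (Fin 2) (ZMod p) :=
      fun n => MvPolynomial.map (Int.castRingHom (ZMod p)) (xi n)
    Ξ (m + 1) ^ p + (-1) ^ p * X 0 ^ (m * p) * (1 - X 1) ^ ((m + 1) * p) =
      ∑ i ∈ Finset.range (k + 1),
        (k.choose i : MvPolynomial (Fin 2) (ZMod p)) * (-1) ^ i * Ξ (m + 1) ^ (k - i) *
          (X 0 * (1 - X 1) * Ξ m) ^ i * (1 - X 0 * X 1) ^ l * Ξ m ^ p := by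
  haveI : Fact p.Prime := ⟨hp⟩
  beta_reduce
  set F : ℕ → MvPolynomial (Fin 2) (ZMod p) :=
    fun n => MvPolynomial.map (Int.castRingHom (ZMod p)) (xi n) with hF
  show F (m + 1) ^ p + (-1) ^ p * X 0 ^ (m * p) * (1 - X 1) ^ ((m + 1) * p) =
      ∑ i ∈ Finset.range (p / (m + 1) + 1),
        ((p / (m + 1)).choose i : MvPolynomial (Fin 2) (ZMod p)) * (-1) ^ i *
          F (m + 1) ^ (p / (m + 1) - i) *
          (X 0 * (1 - X 1) * F m) ^ i * (1 - X 0 * X 1) ^ (p % (m + 1)) * F m ^ p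
  set k := p / (m + 1) with hk
  set l := p % (m + 1) with hl
  have hB : F (m + 1) = (1 - X 0 * X 1) * F m + X 0 ^ m * (1 - X 1) ^ (m + 1) := by
    show map (Int.castRingHom (ZMod p)) (xi (m + 1)) = _
    rw [xiB m]
    simp [F]
  have hA : F (m + 1) = X 0 * (1 - X 1) * F m + (1 - X 0 * X 1) ^ (m + 1) := by
    show map (Int.castRingHom (ZMod p)) (xi (m + 1)) = _
    rw [xiA m]
    simp [F]
  have hL : F (m + 1) ^ p + (-1) ^ p * X 0 ^ (m * p) * (1 - X 1) ^ ((m + 1) * p)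
      = ((1 - X 0 * X 1) * F m) ^ p := by
    have h1 : ((1 - X 0 * X 1) * F m) ^ p
        = (F (m + 1) - X 0 ^ m * (1 - X 1) ^ (m + 1)) ^ p := by
      rw [hB]; ring_nf
    rw [h1, sub_pow_char (F (m + 1)) (X 0 ^ m * (1 - X 1) ^ (m + 1)),
        neg_one_pow_char (MvPolynomial (Fin 2) (ZMod p)), mul_pow, ← pow_mul, ← pow_mul]
    ring
  have hR : ∑ i ∈ Finset.range (k + 1),
        (k.choose i : MvPolynomial (Fin 2) (ZMod p)) * (-1) ^ i * F (m + 1) ^ (k - i) *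
          (X 0 * (1 - X 1) * F m) ^ i * (1 - X 0 * X 1) ^ l * F m ^ p
      = ((1 - X 0 * X 1) ^ (m + 1)) ^ k * ((1 - X 0 * X 1) ^ l * F m ^ p) := by
    calc ∑ i ∈ Finset.range (k + 1),
          (k.choose i : MvPolynomial (Fin 2) (ZMod p)) * (-1) ^ i * F (m + 1) ^ (k - i) *
            (X 0 * (1 - X 1) * F m) ^ i * (1 - X 0 * X 1) ^ l * F m ^ p
        = ∑ i ∈ Finset.range (k + 1),
            (-(X 0 * (1 - X 1) * F m)) ^ i * F (m + 1) ^ (k - i)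
              * (k.choose i : MvPolynomial (Fin 2) (ZMod p))
              * ((1 - X 0 * X 1) ^ l * F m ^ p) := by
          exact Finset.sum_congr rfl fun i _ => by rw [neg_pow (X 0 * (1 - X 1) * F m)]; ring
      _ = (∑ i ∈ Finset.range (k + 1),
            (-(X 0 * (1 - X 1) * F m)) ^ i * F (m + 1) ^ (k - i)
              * (k.choose i : MvPolynomial (Fin 2) (ZMod p)))
              * ((1 - X 0 * X 1) ^ l * F m ^ p) := by
          rw [Finset.sum_mul]
      _ = (-(X 0 * (1 - X 1) * F m) + F (m + 1)) ^ k
              * ((1 - X 0 * X 1) ^ l * F m ^ p) := by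
          rw [add_pow]
      _ = ((1 - X 0 * X 1) ^ (m + 1)) ^ k * ((1 - X 0 * X 1) ^ l * F m ^ p) := by
          rw [show -(X 0 * (1 - X 1) * F m) + F (m + 1)
              = (1 - X 0 * X 1 : MvPolynomial (Fin 2) (ZMod p)) ^ (m + 1) from by
            linear_combination hA]
  rw [hL, hR, ← pow_mul, ← mul_assoc, ← pow_add]
  have hp' : (m + 1) * k + l = p := Nat.div_add_mod p (m + 1)
  rw [hp', mul_pow]
end

section
/- Let k be an algebraically closed field of characteristic zero, let m ≥ 1 be an integer, and let α, β be rational numbers satisfying the KN(m) bounds. Then there is NO polynomial ζ ∈ k[x,y] with all of the following properties: (a) ζ lies in the m·(m+1)-th power of the ideal of k[x,y] generated by (x − 1) and (y − 1); (b) the constant coefficient of ζ is nonzero; (c) every pair (i,j) ∈ ℕ² for which the coefficient of x^i·y^j in ζ is nonzero satisfies the inequalities (m+1)·i ≥ (m+α)·j and (m+1)·(i − m²) ≤ (1−β)·j (as inequalities of rational numbers). -/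
open MvPolynomial Finset

/-- The Kurano–Nishida bounds `KN(m)` on a pair of real numbers `(α, β)`:
`0 < α < 1/(1+(m+1)+(m+1)²)` and
`1/(m+2) < β < 1 − 1/(1 + 1/(m+1) + 1/(m+1)² − α/(1−(m+2)α))`. -/
def KNBounds (m : ℕ) (α β : ℝ) : Prop :=
  0 < α ∧ α < 1 / (1 + ((m : ℝ) + 1) + ((m : ℝ) + 1) ^ 2) ∧
  1 / ((m : ℝ) + 2) < β ∧
  β < 1 - 1 / (1 + 1 / ((m : ℝ) + 1) + 1 / ((m : ℝ) + 1) ^ 2 -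
    α / (1 - ((m : ℝ) + 2) * α))

set_option maxHeartbeats 1000000 in
/-- The final arithmetic contradiction: under the (lower) Kurano–Nishida bounds, no lattice
point `(i, j)` of the Newton triangle can have `i ≥ m(m+1)`. -/
lemma kn_arith (m i j : ℕ) (hm : 1 ≤ m) (α β : ℚ) (hα : 0 < α)
    (hβ2 : 1 < ((m:ℚ)+2)*β) (hβ1 : β < 1) (hi : m*(m+1) ≤ i)
    (h1 : ((m:ℚ)+1)*(i:ℚ) ≥ ((m:ℚ)+α)*(j:ℚ))
    (h2 : ((m:ℚ)+1)*((i:ℚ)-(m:ℚ)^2) ≤ (1-β)*(j:ℚ)) : False := by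
  have hM : (1:ℚ) ≤ (m:ℚ) := by exact_mod_cast hm
  have hj0 : (0:ℚ) ≤ (j:ℚ) := Nat.cast_nonneg j
  rcases eq_or_lt_of_le hi with he | hlt
  · -- i = m(m+1): then m(m+2) < j < (m+1)², impossible for an integer j
    have hiq : (i:ℚ) = (m:ℚ)*((m:ℚ)+1) := by rw [← he]; push_cast; ring
    rw [hiq] at h1 h2
    have hj1 : (m:ℚ)*((m:ℚ)+2) < (j:ℚ) := by nlinarith [h2, hβ2, hβ1, hM, hj0]
    have hj2 : (j:ℚ) < ((m:ℚ)+1)^2 := by nlinarith [h1, hα, hM]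
    have hj1' : m*(m+2) < j := by exact_mod_cast (by push_cast; linarith : ((m*(m+2) : ℕ) : ℚ) < (j:ℚ))
    have : ((m*(m+2)+1 : ℕ) : ℚ) ≤ (j:ℚ) := by exact_mod_cast hj1'
    push_cast at this
    nlinarith [this, hj2]
  · -- i ≥ m(m+1)+1: the two edge inequalities are incompatible
    have hi' : (m:ℚ)*((m:ℚ)+1)+1 ≤ (i:ℚ) := by
      have : m*(m+1)+1 ≤ i := hlt
      have := (Nat.cast_le (α := ℚ)).mpr this
      push_cast at this; linarith
    have hmα : (0:ℚ) < (m:ℚ)+α := by linarith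
    have hβpos : (0:ℚ) < β := by nlinarith [hβ2, hM]
    have e1 : ((m:ℚ)+α) * (((m:ℚ)+1)*((i:ℚ)-(m:ℚ)^2)) ≤ ((m:ℚ)+α) * ((1-β)*(j:ℚ)) :=
      mul_le_mul_of_nonneg_left h2 hmα.le
    have e2 : (1-β) * (((m:ℚ)+α)*(j:ℚ)) ≤ (1-β) * (((m:ℚ)+1)*(i:ℚ)) :=
      mul_le_mul_of_nonneg_left h1 (by linarith)
    have key : (i:ℚ)*((m:ℚ)+α-1+β) ≤ (m:ℚ)^2*((m:ℚ)+α) := by nlinarith [e1, e2, hM]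
    have hD : (0:ℚ) < (m:ℚ)+α-1+β := by linarith
    have step : ((m:ℚ)^2+(m:ℚ)+1)*((m:ℚ)+α-1+β) ≤ (m:ℚ)^2*((m:ℚ)+α) := by
      have := mul_le_mul_of_nonneg_right hi' hD.le
      nlinarith [this, key]
    have f1 : ((m:ℚ)+2)*(((m:ℚ)^2+(m:ℚ)+1)*((m:ℚ)+α-1+β)) ≤ ((m:ℚ)+2)*((m:ℚ)^2*((m:ℚ)+α)) :=
      mul_le_mul_of_nonneg_left step (by linarith)
    have f2 : ((m:ℚ)^2+(m:ℚ)+1)*1 < ((m:ℚ)^2+(m:ℚ)+1)*(((m:ℚ)+2)*β) :=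
      mul_lt_mul_of_pos_left hβ2 (by nlinarith)
    have hm2 : (1:ℚ) ≤ (m:ℚ)^2 := by nlinarith [hM]
    have ha1 : (0:ℚ) ≤ α*(m:ℚ)^2 := by positivity
    have ha2 : (0:ℚ) ≤ α*(m:ℚ) := by positivity
    linarith [f1, f2, hm2, ha1, ha2, hα.le]

lemma fin2_repr (d : Fin 2 →₀ ℕ) : d = Finsupp.single 0 (d 0) + Finsupp.single 1 (d 1) := by
  ext a
  fin_cases a <;> simp [Finsupp.single_apply]

/-- Specializing `y := 1, x := t` : a polynomial vanishing to order `m(m+1)` at `(1,1)` whose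
only support point on the `y`-axis is the origin (with nonzero coefficient there) must have a
support point with first coordinate at least `m(m+1)`. -/
lemma key_support {k : Type*} [Field k] (m : ℕ) (ζ : MvPolynomial (Fin 2) k)
    (ha : ζ ∈ (Ideal.span {X 0 - 1, X 1 - 1} : Ideal (MvPolynomial (Fin 2) k)) ^ (m * (m + 1)))
    (hb : MvPolynomial.coeff 0 ζ ≠ 0)
    (hz : ∀ d ∈ ζ.support, d 0 = 0 → d = 0) :
    ∃ d ∈ ζ.support, m * (m + 1) ≤ d 0 := by
  set φ : MvPolynomial (Fin 2) k →+* Polynomial k :=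
    MvPolynomial.eval₂Hom Polynomial.C ![Polynomial.X, 1] with hφ
  set p : Polynomial k := φ ζ with hpdef
  have hp : p = ∑ d ∈ ζ.support, Polynomial.C (MvPolynomial.coeff d ζ) * Polynomial.X ^ (d 0) := by
    rw [hpdef, hφ]
    rw [show (MvPolynomial.eval₂Hom Polynomial.C ![Polynomial.X, 1]) ζ
        = MvPolynomial.eval₂ Polynomial.C ![Polynomial.X, 1] ζ from rfl]
    rw [MvPolynomial.eval₂_eq' Polynomial.C ![Polynomial.X, 1] ζ]
    refine Finset.sum_congr rfl fun d _ => ?_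
    rw [Fin.prod_univ_two]
    simp
  -- coefficient vanishing
  have hcoeff : ∀ N : ℕ, (∀ d ∈ ζ.support, d 0 ≠ N) → p.coeff N = 0 := by
    intro N hN
    rw [hp, Polynomial.finset_sum_coeff]
    refine Finset.sum_eq_zero fun d hd => ?_
    rw [Polynomial.coeff_C_mul, Polynomial.coeff_X_pow, if_neg (fun hh => hN d hd hh.symm), mul_zero]
  -- p.coeff 0 = coeff 0 ζ
  have h0 : p.coeff 0 = MvPolynomial.coeff 0 ζ := by
    rw [hp, Polynomial.finset_sum_coeff]
    rw [Finset.sum_eq_single (0 : Fin 2 →₀ ℕ)]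
    · simp
    · intro d hd hne
      rw [Polynomial.coeff_C_mul, Polynomial.coeff_X_pow]
      have : d 0 ≠ 0 := fun hh => hne (hz d hd hh)
      rw [if_neg (fun hh => this hh.symm), mul_zero]
    · intro hnm
      rw [MvPolynomial.notMem_support_iff.mp hnm]
      simp
  have hpne : p ≠ 0 := fun hh => hb (by rw [← h0, hh, Polynomial.coeff_zero])
  -- (X - 1) ^ (m(m+1)) divides p
  have hmem : p ∈ (Ideal.span {Polynomial.X - 1} : Ideal (Polynomial k)) ^ (m * (m + 1)) := by
    have h1 := Ideal.mem_map_of_mem φ ha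
    rw [Ideal.map_pow, Ideal.map_span, Set.image_pair] at h1
    have e1 : φ (X 0 - 1) = Polynomial.X - 1 := by
      rw [map_sub, map_one, hφ, MvPolynomial.eval₂Hom_X']
      simp
    have e2 : φ (X 1 - 1) = 0 := by
      rw [map_sub, map_one, hφ, MvPolynomial.eval₂Hom_X']
      simp
    rw [e1, e2, Set.pair_comm] at h1
    have hsp : (Ideal.span {0, Polynomial.X - 1} : Ideal (Polynomial k)) = Ideal.span {Polynomial.X - 1} :=
      Submodule.span_insert_zero
    rwa [hsp] at h1
  have hdvd : (Polynomial.X - 1 : Polynomial k) ^ (m * (m + 1)) ∣ p := by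
    rwa [Ideal.span_singleton_pow, Ideal.mem_span_singleton] at hmem
  have hdeg : m * (m + 1) ≤ p.natDegree := by
    have hnd : ((Polynomial.X - 1 : Polynomial k) ^ (m * (m + 1))).natDegree = m * (m + 1) := by
      rw [Polynomial.natDegree_pow, ← Polynomial.C_1, Polynomial.natDegree_X_sub_C, mul_one]
    calc m * (m + 1) = ((Polynomial.X - 1 : Polynomial k) ^ (m * (m + 1))).natDegree := hnd.symm
      _ ≤ p.natDegree := Polynomial.natDegree_le_of_dvd hdvd hpne
  by_contra hcon
  push_neg at hcon
  have hLC : p.coeff p.natDegree ≠ 0 := Polynomial.leadingCoeff_ne_zero.mpr hpne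
  exact hLC (hcoeff _ fun d hd => Nat.ne_of_lt (lt_of_lt_of_le (hcon d hd) hdeg))

theorem stmt_11 (k : Type*) [Field k] [IsAlgClosed k] [CharZero k]
    (m : ℕ) (hm : 1 ≤ m) (α β : ℚ)
    (h : KNBounds m (α : ℝ) (β : ℝ)) :
    ¬ ∃ ζ : MvPolynomial (Fin 2) k,
        -- (a) ζ vanishes to order m(m+1) at (1,1)
        ζ ∈ (Ideal.span {X 0 - 1, X 1 - 1} :
              Ideal (MvPolynomial (Fin 2) k)) ^ (m * (m + 1)) ∧
        -- (b) the constant coefficient of ζ is nonzero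
        MvPolynomial.coeff 0 ζ ≠ 0 ∧
        -- (c) the Newton polygon condition
        (∀ i j : ℕ, MvPolynomial.coeff (Finsupp.single 0 i + Finsupp.single 1 j) ζ ≠ 0 →
          ((m : ℚ) + 1) * (i : ℚ) ≥ ((m : ℚ) + α) * (j : ℚ) ∧
          ((m : ℚ) + 1) * ((i : ℚ) - (m : ℚ) ^ 2) ≤ (1 - β) * (j : ℚ)) := by
  rintro ⟨ζ, ha, hb, hc⟩
  obtain ⟨hα0, hαu, hβl, hβu⟩ := h
  have hmm : (1:ℝ) ≤ (m:ℝ) := by exact_mod_cast hm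
  have hm0 : (0:ℝ) ≤ (m:ℝ) := by linarith
  -- transfer the needed bounds to ℚ
  have hαQ : (0:ℚ) < α := by exact_mod_cast hα0
  have hβ2 : (1:ℚ) < ((m:ℚ)+2)*β := by
    have hx : (0:ℝ) < (m:ℝ)+2 := by linarith
    have h1 := (div_lt_iff₀ hx).mp hβl
    have h2 : (1:ℚ) < β*((m:ℚ)+2) := by exact_mod_cast h1
    linarith [h2]
  have hβ1 : β < 1 := by
    have hd1 : (0:ℝ) < 1 + ((m:ℝ)+1) + ((m:ℝ)+1)^2 := by positivity
    have hαu' : (α:ℝ) * (1 + ((m:ℝ)+1) + ((m:ℝ)+1)^2) < 1 := (lt_div_iff₀ hd1).mp hαu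
    have h2 : (0:ℝ) < 1 - ((m:ℝ)+2)*(α:ℝ) := by
      nlinarith [hα0, hαu', mul_nonneg hα0.le hm0, mul_nonneg (mul_nonneg hα0.le hm0) hm0]
    have h3 : (α:ℝ)/(1 - ((m:ℝ)+2)*(α:ℝ)) < 1 := by
      rw [div_lt_one h2]
      nlinarith [hα0, hαu', mul_nonneg hα0.le hm0, mul_nonneg (mul_nonneg hα0.le hm0) hm0]
    have hE : (0:ℝ) < 1 + 1/((m:ℝ)+1) + 1/((m:ℝ)+1)^2 - (α:ℝ)/(1 - ((m:ℝ)+2)*(α:ℝ)) := by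
      have p1 : (0:ℝ) < 1/((m:ℝ)+1) := by positivity
      have p2 : (0:ℝ) < 1/((m:ℝ)+1)^2 := by positivity
      linarith [h3]
    have hβ1R : (β:ℝ) < 1 := by
      have := one_div_pos.mpr hE
      linarith [hβu]
    exact_mod_cast hβ1R
  -- the only support point on the y-axis is the origin
  have hz : ∀ d ∈ ζ.support, d 0 = 0 → d = 0 := by
    intro d hd h00
    have hcd := MvPolynomial.mem_support_iff.mp hd
    rw [fin2_repr d] at hcd
    obtain ⟨c1, _⟩ := hc (d 0) (d 1) hcd
    have hcast : ((d 0 : ℕ) : ℚ) = 0 := by rw [h00]; simp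
    have hj0 : (0:ℚ) ≤ ((d 1 : ℕ) : ℚ) := Nat.cast_nonneg _
    have hM : (0:ℚ) ≤ (m:ℚ) := Nat.cast_nonneg m
    have hd1 : ((d 1 : ℕ) : ℚ) = 0 := by nlinarith [c1, hcast, hαQ, hj0, hM]
    have hd1' : d 1 = 0 := by exact_mod_cast hd1
    rw [fin2_repr d, h00, hd1']
    simp
  -- main step: some support point has first coordinate ≥ m(m+1)
  obtain ⟨d, hd, hdeg⟩ := key_support m ζ ha hb hz
  have hcd := MvPolynomial.mem_support_iff.mp hd
  rw [fin2_repr d] at hcd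
  obtain ⟨c1, c2⟩ := hc (d 0) (d 1) hcd
  exact kn_arith m (d 0) (d 1) hm α β hαQ hβ2 hβ1 hdeg c1 c2
end

section
/- Let m ≥ 1 be an integer and let α, β be real numbers satisfying the KN(m) bounds. Then α + β < 1/(m+1). (Equivalently, the triangle with vertices (−α,0), (m−1+β,0), (m,m+1) has area strictly less than m²/2, so the curve defined by ξ_m in the blowup is a negative curve.) -/
open MvPolynomial Finset

theorem stmt_12 (m : ℕ) (hm : 1 ≤ m) (α β : ℝ) (h : KNBounds m α β) :
    α + β < 1 / ((m : ℝ) + 1) := by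
  obtain ⟨hα0, hα1, hβ0, hβ1⟩ := h
  set M : ℝ := (m : ℝ) + 1 with hMdef
  have hM : (2:ℝ) ≤ M := by
    have : (1:ℝ) ≤ (m:ℝ) := by exact_mod_cast hm
    simp [hMdef]; linarith
  have hM0 : (0:ℝ) < M := by linarith
  have hQ : (0:ℝ) < 1 + M + M ^ 2 := by nlinarith
  have hαQ : α * (1 + M + M ^ 2) < 1 := (lt_div_iff₀ hQ).mp hα1
  have hm2 : ((m : ℝ) + 2) = M + 1 := by simp [hMdef]; ring
  have hs : 0 < 1 - (M + 1) * α := by nlinarith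
  -- rewrite β bounds in terms of M
  rw [hm2] at hβ1
  have hN : 0 < (1 + M + M ^ 2) * (1 - (M + 1) * α) - M ^ 2 * α := by nlinarith
  have hDval : 1 + 1 / M + 1 / M ^ 2 - α / (1 - (M + 1) * α) =
      ((1 + M + M ^ 2) * (1 - (M + 1) * α) - M ^ 2 * α) / (M ^ 2 * (1 - (M + 1) * α)) := by
    field_simp
    ring
  rw [hDval, one_div_div] at hβ1
  -- key inequality
  have key : 1 - M ^ 2 * (1 - (M + 1) * α) /
      ((1 + M + M ^ 2) * (1 - (M + 1) * α) - M ^ 2 * α) < 1 / M - α := by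
    have hMne : M ≠ 0 := ne_of_gt hM0
    rw [sub_lt_iff_lt_add, ← sub_lt_iff_lt_add',
      show (1:ℝ) - (1 / M - α) = (M - 1 + M * α) / M by field_simp; ring,
      div_lt_div_iff₀ hM0 hN]
    nlinarith [sq_nonneg (M*α), sq_nonneg α, mul_pos hα0 hs, sq_nonneg (M - 2)]
  linarith
end

section
/- For every integer m ≥ 1, the rational numbers α = 1/(m+2)² and β = ((m+2)²+1)/((m+2)³+1) satisfy the KN(m) bounds. -/
open MvPolynomial Finset

theorem stmt_14 (m : ℕ) (hm : 1 ≤ m) :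
    KNBounds m ((1 / ((m : ℚ) + 2) ^ 2 : ℚ) : ℝ)
      (((((m : ℚ) + 2) ^ 2 + 1) / (((m : ℚ) + 2) ^ 3 + 1) : ℚ) : ℝ) := by
  unfold KNBounds
  push_cast
  set x : ℝ := (m : ℝ) with hxdef
  have hx : (1 : ℝ) ≤ x := by rw [hxdef]; exact_mod_cast hm
  have h1 : (0:ℝ) < x + 1 := by linarith
  have h2 : (0:ℝ) < x + 2 := by linarith
  have h3 : (0:ℝ) < (x + 2) ^ 2 := by positivity
  have h4 : (0:ℝ) < (x + 2) ^ 3 + 1 := by positivity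
  have h5 : (0:ℝ) < 1 + (x + 1) + (x + 1) ^ 2 := by positivity
  have hP : (0:ℝ) < (x + 2) ^ 3 - (x + 2) ^ 2 + 1 := by nlinarith
  refine ⟨by positivity, ?_, ?_, ?_⟩
  · rw [div_lt_div_iff₀ h3 h5]
    nlinarith
  · rw [div_lt_div_iff₀ h2 h4]
    nlinarith
  · have e1 : 1 - (x + 2) * (1 / (x + 2) ^ 2) = (x + 1) / (x + 2) := by
      field_simp
      ring
    rw [e1]
    have e2 : 1 + 1 / (x + 1) + 1 / (x + 1) ^ 2 - (1 / (x + 2) ^ 2) / ((x + 1) / (x + 2))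
        = ((x + 2) ^ 3 - (x + 2) ^ 2 + 1) / ((x + 2) * (x + 1) ^ 2) := by
      field_simp
      ring
    rw [e2, one_div_div]
    have e3 : 1 - (x + 2) * (x + 1) ^ 2 / ((x + 2) ^ 3 - (x + 2) ^ 2 + 1)
        = ((x + 2) ^ 3 - (x + 2) ^ 2 + 1 - (x + 2) * (x + 1) ^ 2) /
          ((x + 2) ^ 3 - (x + 2) ^ 2 + 1) := by
      rw [sub_div, div_self hP.ne']
    rw [e3, div_lt_div_iff₀ h4 hP]
    nlinarith [sq_nonneg x, sq_nonneg (x+1)]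
end

section
/- For every integer m ≥ 1 and every pair (i,j) ∈ ℕ² such that the coefficient of x^i·y^j in ξ_{m+1} is nonzero, the inequalities (m+2)·(i − m) ≤ j and (m+2)·i ≥ (m+1)·j hold. (Equivalently, the Newton polygon of ξ_{m+1} is contained in the triangle with base [0,m] on the x-axis whose left and right edges have slopes (m+1)/(m + 1/(m+2)) and (m+1)/(1 − 1/(m+2)) respectively; this is the content of the paper's remark that when β ≤ 1/(m+2) the polynomial ξ_{m+1} defines a curve disjoint from the negative curve, so the blowup is a Mori Dream Space.) -/
open MvPolynomial Finset

lemma key_s16 (a b i j : ℕ) (c : ℤ) :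
    MvPolynomial.coeff (Finsupp.single 0 i + Finsupp.single 1 j)
      ((C c : MvPolynomial (Fin 2) ℤ) * X 0 ^ a * X 1 ^ b) =
    if i = a ∧ j = b then c else 0 := by
  rw [mul_assoc, ← monomial_zero', X_pow_eq_monomial, X_pow_eq_monomial, monomial_mul, monomial_mul,
    coeff_monomial]
  simp only [zero_add, mul_one, one_mul]
  congr 1
  rw [eq_iff_iff]
  constructor
  · intro h
    have h0 := DFunLike.congr_fun h 0
    have h1 := DFunLike.congr_fun h 1
    simp [Finsupp.single_apply] at h0 h1
    exact ⟨h0.symm, h1.symm⟩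
  · rintro ⟨rfl, rfl⟩; rfl

lemma key2 (a b i j k n : ℕ) :
    MvPolynomial.coeff (Finsupp.single 0 i + Finsupp.single 1 j)
      ((-1) ^ k * (n : MvPolynomial (Fin 2) ℤ) * X 0 ^ a * X 1 ^ b) =
    if i = a ∧ j = b then ((-1 : ℤ) ^ k * n) else 0 := by
  have h : ((-1 : MvPolynomial (Fin 2) ℤ)) ^ k * (n : MvPolynomial (Fin 2) ℤ) =
      C ((-1) ^ k * (n : ℤ)) := by
    simp [map_mul]
  rw [h, key_s16]

lemma key3 (a b i j k : ℕ) :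
    MvPolynomial.coeff (Finsupp.single 0 i + Finsupp.single 1 j)
      ((-1) ^ k * X 0 ^ a * X 1 ^ b : MvPolynomial (Fin 2) ℤ) =
    if i = a ∧ j = b then ((-1 : ℤ) ^ k) else 0 := by
  have h : ((-1 : MvPolynomial (Fin 2) ℤ)) ^ k = C ((-1) ^ k) := by simp
  rw [h, key_s16]

theorem stmt_16 (m : ℕ) (hm : 1 ≤ m) (i j : ℕ)
    (hc : MvPolynomial.coeff (Finsupp.single 0 i + Finsupp.single 1 j) (xi (m + 1)) ≠ 0) :
    ((m : ℤ) + 2) * ((i : ℤ) - (m : ℤ)) ≤ (j : ℤ) ∧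
      ((m : ℤ) + 2) * (i : ℤ) ≥ ((m : ℤ) + 1) * (j : ℤ) := by
  have hkey : (i = m + 1 ∧ j = m + 2) ∨ (j ≤ i ∧ i ≤ m) := by
    by_contra h
    push_neg at h
    apply hc
    rw [xi, coeff_add, key3]
    rw [if_neg (by exact fun ⟨h1, h2⟩ => (h.1 h1 h2).elim)]
    rw [zero_add]
    rw [coeff_sum]
    apply Finset.sum_eq_zero
    intro j' hj'
    rw [coeff_sum]
    apply Finset.sum_eq_zero
    intro i' hi'
    rw [key2, if_neg]
    rintro ⟨rfl, rfl⟩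
    simp only [Finset.mem_Icc, Finset.mem_range] at hi' hj'
    omega
  rcases hkey with ⟨rfl, rfl⟩ | ⟨h1, h2⟩ <;> constructor <;> push_cast <;> nlinarith
end
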